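/- Let A ∈ ℝ^{m×n} with rank(A) = m. Then sup{‖Aᵀ(ADAᵀ)^{−1}AD‖ : D an n×n positive definite diagonal matrix} = max{‖A_B^{−1}A‖ : A_B a nonsingular m×m column-submatrix of A}, where ‖·‖ denotes the ℓ₂→ℓ₂ operator norm. -/

import Mathlib

open scoped BigOperators

variable {ι : Type*} [Fintype ι] [DecidableEq ι]

/-- The ℓ₁ norm of a vector. -/
noncomputable def norm1 (x : ι → ℝ) : ℝ := ∑ i, |x i|

/-- The ℓ∞ norm of a vector. -/
noncomputable def normInf (x : ι → ℝ) : ℝ := ⨆ i, |x i|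

/-- The ℓ₂ norm of a vector. -/
noncomputable def norm2 (x : ι → ℝ) : ℝ := Real.sqrt (∑ i, (x i) ^ 2)

/-- The componentwise negative part `max (-x) 0`. -/
noncomputable def vneg (x : ι → ℝ) : ι → ℝ := fun i => max (-(x i)) 0

/-- The componentwise positive part `max x 0`. -/
noncomputable def vpos (x : ι → ℝ) : ι → ℝ := fun i => max (x i) 0

/-- `y` is sign-consistent with `x`. -/
def SignConsistent (y x : ι → ℝ) : Prop :=
  (∀ i, 0 ≤ x i * y i) ∧ ∀ i, x i = 0 → y i = 0

/-- The subspace `ℝ^n_C` of vectors supported on `C`. -/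
def coordSubspace (C : Set ι) : Submodule ℝ (ι → ℝ) where
  carrier := {x | ∀ i ∉ C, x i = 0}
  zero_mem' := by intro i _; rfl
  add_mem' := by intro a b ha hb i hi; simp [ha i hi, hb i hi]
  smul_mem' := by intro c a ha i hi; simp [ha i hi]

/-- `C` is a circuit of the subspace `W`: `W ∩ ℝ^n_C` is one-dimensional and no
strict subset of `C` has this property. -/
def IsCircuit (W : Submodule ℝ (ι → ℝ)) (C : Set ι) : Prop :=
  Module.finrank ℝ ↥(W ⊓ coordSubspace C) = 1 ∧
  ∀ C' : Set ι, C' ⊂ C → Module.finrank ℝ ↥(W ⊓ coordSubspace C') ≠ 1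

/-- The circuit imbalance measure `κ_W`. -/
noncomputable def kappa (W : Submodule ℝ (ι → ℝ)) : ℝ :=
  sSup ({1} ∪ {r | ∃ C : Set ι, IsCircuit W C ∧ ∃ g ∈ W, g ≠ 0 ∧ {i | g i ≠ 0} = C ∧
    r = sSup ((fun i => |g i|) '' C) / sInf ((fun i => |g i|) '' C)})

/-- The matroidal closure of `K` with respect to `W`. -/
def clos (W : Submodule ℝ (ι → ℝ)) (K : Set ι) : Set ι :=
  K ∪ {j | j ∉ K ∧ ∃ C : Set ι, IsCircuit W C ∧ j ∈ C ∧ C ⊆ K ∪ {j}}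

/-- `z` is the minimum-norm lift `L_I^W(p)` of `p` to `W`:
`z ∈ W`, `z` agrees with `p` on `I`, and `z` has minimum ℓ₂-norm among such vectors. -/
def IsMinLift (W : Submodule ℝ (ι → ℝ)) (I : Finset ι) (p z : ι → ℝ) : Prop :=
  z ∈ W ∧ (∀ i ∈ I, z i = p i) ∧
  ∀ z' ∈ W, (∀ i ∈ I, z' i = p i) → norm2 z ≤ norm2 z'

/-- The ℓ₂→ℓ₂ operator norm of the lifting map `L_I^W` on `π_I(W)`. -/
noncomputable def liftOpNorm (W : Submodule ℝ (ι → ℝ)) (I : Finset ι) : ℝ :=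
  sSup {r | ∃ p z, IsMinLift W I p z ∧ r = norm2 z / Real.sqrt (∑ i ∈ I, (p i) ^ 2)}

/-- The condition number `χ̄_W = max{‖L_I^W‖ : ∅ ≠ I}`. -/
noncomputable def chiBar (W : Submodule ℝ (ι → ℝ)) : ℝ :=
  sSup {r | ∃ I : Finset ι, I.Nonempty ∧ r = liftOpNorm W I}

/-- The orthogonal complement of `W` in `ℝ^n`. -/
def orthComp (W : Submodule ℝ (ι → ℝ)) : Submodule ℝ (ι → ℝ) where
  carrier := {y | ∀ x ∈ W, ∑ i, x i * y i = 0}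
  zero_mem' := by intro x hx; simp
  add_mem' := by
    intro a b ha hb x hx
    simpa [mul_add, Finset.sum_add_distrib, ha x hx] using hb x hx
  smul_mem' := by
    intro c a ha x hx
    have h := ha x hx
    have : ∑ i, x i * (c • a) i = c * ∑ i, x i * a i := by
      rw [Finset.mul_sum]
      refine Finset.sum_congr rfl fun i _ => ?_
      simp [Pi.smul_apply, smul_eq_mul]; ring
    simpa [this, h]

/-- `x` is a feasible solution to the primal program of Primal-Dual(W,d,c). -/
def PrimalFeasible (W : Submodule ℝ (ι → ℝ)) (d x : ι → ℝ) : Prop :=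
  x - d ∈ W ∧ ∀ i, 0 ≤ x i

/-- `s` is a feasible solution to the dual program of Primal-Dual(W,d,c). -/
def DualFeasible (W : Submodule ℝ (ι → ℝ)) (c s : ι → ℝ) : Prop :=
  s - c ∈ orthComp W ∧ ∀ i, 0 ≤ s i

/-- `(x,s)` is an optimal solution to Primal-Dual(W,d,c): both feasible and `⟨x,s⟩ = 0`. -/
def IsOptimalPair (W : Submodule ℝ (ι → ℝ)) (d c x s : ι → ℝ) : Prop :=
  PrimalFeasible W d x ∧ DualFeasible W c s ∧ ∑ i, x i * s i = 0

/-- The ℓ₂→ℓ₂ operator norm of a matrix. -/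
noncomputable def l2OpNorm {m n : Type*} [Fintype m] [Fintype n] [DecidableEq n]
    (A : Matrix m n ℝ) : ℝ :=
  ‖LinearMap.toContinuousLinearMap (Matrix.toEuclideanLin A)‖

/-- The max-norm (largest absolute value of an entry) of a matrix. -/
noncomputable def matMaxNorm {m n : Type*} [Fintype m] [Fintype n] (A : Matrix m n ℝ) : ℝ :=
  ⨆ i, ⨆ j, |A i j|

namespace ChiAux

open Matrix BigOperators Filter Topology
open scoped Matrix.Norms.L2Operator

variable {m n : ℕ}

lemma det_expand (A : Matrix (Fin m) (Fin n) ℝ) (d : Fin n → ℝ) (C : Matrix (Fin n) (Fin m) ℝ) :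
    (A * diagonal d * C).det
      = ∑ φ : Fin m → Fin n, (∏ i, A i (φ i) * d (φ i)) * (C.submatrix φ id).det := by
  have h1 : ((A * diagonal d * C) : Matrix (Fin m) (Fin m) ℝ)
      = Matrix.of fun i => ∑ l, (A i l * d l) • (C l : Fin m → ℝ) := by
    ext i k
    simp [Matrix.mul_apply, Matrix.diagonal_apply, Finset.sum_apply, mul_assoc]
  rw [h1]
  show (Matrix.detRowAlternating (R := ℝ) (n := Fin m)).toMultilinearMap
      (fun i => ∑ l, (A i l * d l) • (C l : Fin m → ℝ)) = _
  rw [(Matrix.detRowAlternating (R := ℝ) (n := Fin m)).toMultilinearMap.map_sum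
    (fun i l => (A i l * d l) • (C l : Fin m → ℝ))]
  refine Finset.sum_congr rfl fun φ _ => ?_
  rw [(Matrix.detRowAlternating (R := ℝ) (n := Fin m)).toMultilinearMap.map_smul_univ
    (fun i => A i (φ i) * d (φ i)) (fun i => (C (φ i) : Fin m → ℝ))]
  rfl

lemma det_submatrix_expand (A : Matrix (Fin m) (Fin n) ℝ) (ψ : Fin m → Fin n) :
    (A.submatrix id ψ).det
      = ∑ σ : Equiv.Perm (Fin m), (Equiv.Perm.sign σ : ℝ) * ∏ i, A i (ψ (σ i)) := by
  rw [← Matrix.det_transpose, Matrix.det_apply']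
  refine Finset.sum_congr rfl fun σ _ => ?_
  simp [Matrix.transpose_apply, Matrix.submatrix_apply]

theorem cb (A : Matrix (Fin m) (Fin n) ℝ) (d : Fin n → ℝ) (C : Matrix (Fin n) (Fin m) ℝ) :
    (m.factorial : ℝ) * (A * diagonal d * C).det
      = ∑ ψ : Fin m → Fin n,
          (∏ i, d (ψ i)) * ((A.submatrix id ψ).det * (C.submatrix ψ id).det) := by
  have key : ∀ σ : Equiv.Perm (Fin m), ∀ ψ : Fin m → Fin n,
      (∏ i, d (ψ i)) * (((Equiv.Perm.sign σ : ℝ) * ∏ i, A i (ψ (σ i))) * (C.submatrix ψ id).det)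
        = (∏ i, A i ((ψ ∘ σ) i) * d ((ψ ∘ σ) i)) * (C.submatrix (ψ ∘ σ) id).det := by
    intro σ ψ
    have hd : (∏ i, d (ψ i)) = ∏ i, d ((ψ ∘ σ) i) := (Equiv.prod_comp σ (fun i => d (ψ i))).symm
    have hC : (C.submatrix (ψ ∘ σ) id).det = (Equiv.Perm.sign σ : ℝ) * (C.submatrix ψ id).det := by
      have h : C.submatrix (ψ ∘ σ) id = (C.submatrix ψ id).submatrix σ id := by
        ext i j; simp
      rw [h, Matrix.det_permute]
    have hA : (∏ i, A i (ψ (σ i))) = ∏ i, A i ((ψ ∘ σ) i) := rfl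
    rw [Finset.prod_mul_distrib, hC, hA, hd]
    ring
  symm
  calc
    ∑ ψ : Fin m → Fin n, (∏ i, d (ψ i)) * ((A.submatrix id ψ).det * (C.submatrix ψ id).det)
        = ∑ ψ : Fin m → Fin n, ∑ σ : Equiv.Perm (Fin m),
            (∏ i, d (ψ i)) * (((Equiv.Perm.sign σ : ℝ) * ∏ i, A i (ψ (σ i))) * (C.submatrix ψ id).det) := by
          refine Finset.sum_congr rfl fun ψ _ => ?_
          rw [det_submatrix_expand, Finset.sum_mul, Finset.mul_sum]
      _ = ∑ σ : Equiv.Perm (Fin m), ∑ ψ : Fin m → Fin n,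
            (∏ i, A i ((ψ ∘ σ) i) * d ((ψ ∘ σ) i)) * (C.submatrix (ψ ∘ σ) id).det := by
          rw [Finset.sum_comm]
          exact Finset.sum_congr rfl fun σ _ => Finset.sum_congr rfl fun ψ _ => key σ ψ
      _ = ∑ σ : Equiv.Perm (Fin m), ∑ ψ : Fin m → Fin n,
            (∏ i, A i (ψ i) * d (ψ i)) * (C.submatrix ψ id).det := by
          refine Finset.sum_congr rfl fun σ _ => ?_
          have hbij : Function.Bijective (fun (ψ : Fin m → Fin n) => ψ ∘ σ) := by
            constructor
            · intro a b h
              funext i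
              simpa using congrFun h (σ.symm i)
            · intro b
              exact ⟨b ∘ σ.symm, by funext i; simp⟩
          exact Fintype.sum_bijective _ hbij _ _ (fun ψ => rfl)
      _ = (m.factorial : ℝ) * (A * diagonal d * C).det := by
          rw [Finset.sum_const, det_expand A d C]
          simp [Fintype.card_perm, mul_comm]

lemma mul_updateColumn {p : ℕ} (X : Matrix (Fin m) (Fin p) ℝ) (Y : Matrix (Fin p) (Fin m) ℝ)
    (k : Fin m) (w : Fin p → ℝ) :
    X * (Y.updateCol k w) = (X * Y).updateCol k (X.mulVec w) := by
  ext i j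
  by_cases h : j = k <;>
    simp [Matrix.updateCol_apply, Matrix.mul_apply, Matrix.mulVec, dotProduct, h]

lemma submatrix_updateColumn (Y : Matrix (Fin n) (Fin m) ℝ) (φ : Fin m → Fin n)
    (k : Fin m) (w : Fin n → ℝ) :
    (Y.updateCol k w).submatrix φ id = (Y.submatrix φ id).updateCol k (w ∘ φ) := by
  ext i j
  by_cases h : j = k <;> simp [Matrix.updateCol_apply, h]

lemma det_updateColumn_submatrix (A : Matrix (Fin m) (Fin n) ℝ) (φ : Fin m → Fin n)
    (k : Fin m) (j : Fin n) :
    ((Aᵀ.updateCol k (Pi.single j 1)).submatrix φ id).det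
      = ∑ t, (if φ t = j then (1:ℝ) else 0) * (A.submatrix id φ).adjugate t k := by
  rw [submatrix_updateColumn]
  have hN : Aᵀ.submatrix φ id = (A.submatrix id φ)ᵀ := by ext i j; simp
  have hv : (Pi.single j (1:ℝ)) ∘ φ = ∑ t, (if φ t = j then (1:ℝ) else 0) • (Pi.single t (1:ℝ) : Fin m → ℝ) := by
    funext t'
    simp only [Function.comp_apply, Finset.sum_apply, Pi.smul_apply, smul_eq_mul,
      Pi.single_apply]
    rw [Finset.sum_eq_single t']
    · simp [eq_comm]
    · intro b _ hb
      simp [Ne.symm hb]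
    · intro h
      simp at h
  rw [hN, ← Matrix.cramer_apply, hv, map_sum]
  simp only [Finset.sum_apply]
  refine Finset.sum_congr rfl fun t _ => ?_
  rw [LinearMap.map_smul]
  simp only [Pi.smul_apply, smul_eq_mul]
  congr 1

theorem decomp (A : Matrix (Fin m) (Fin n) ℝ) (d : Fin n → ℝ) :
    (m.factorial : ℝ) • ((A * diagonal d * Aᵀ).adjugate * (A * diagonal d))
      = ∑ φ : Fin m → Fin n, ((∏ i, d (φ i)) * (A.submatrix id φ).det) •
          ((A.submatrix id φ).adjugateᵀ * ((1 : Matrix (Fin n) (Fin n) ℝ).submatrix φ id)) := by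
  ext k j
  have hcol : (A * diagonal d * Aᵀ).updateCol k (fun r => (A * diagonal d) r j)
      = A * diagonal d * (Aᵀ.updateCol k (Pi.single j 1)) := by
    rw [mul_updateColumn]
    congr 1
    funext i
    simp [Matrix.mulVec, dotProduct, Pi.single_apply]
  have hL : ((A * diagonal d * Aᵀ).adjugate * (A * diagonal d)) k j
      = ((A * diagonal d * (Aᵀ.updateCol k (Pi.single j 1)))).det := by
    have h1 : ((A * diagonal d * Aᵀ).adjugate * (A * diagonal d)) k j
        = (A * diagonal d * Aᵀ).adjugate.mulVec (fun r => (A * diagonal d) r j) k := by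
      simp [Matrix.mul_apply, Matrix.mulVec, dotProduct]
    rw [h1, ← Matrix.cramer_eq_adjugate_mulVec, Matrix.cramer_apply, hcol]
  simp only [Matrix.smul_apply, Finset.sum_apply, Matrix.sum_apply, hL, smul_eq_mul]
  rw [cb A d (Aᵀ.updateCol k (Pi.single j 1))]
  refine Finset.sum_congr rfl fun φ _ => ?_
  rw [det_updateColumn_submatrix]
  simp only [Matrix.mul_apply, Matrix.transpose_apply, Matrix.one_apply,
    Matrix.submatrix_apply, id_eq, Finset.mul_sum]
  refine Finset.sum_congr rfl fun t _ => ?_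
  ring
lemma conjT_eq_transpose {p q : ℕ} (X : Matrix (Fin p) (Fin q) ℝ) : Xᴴ = Xᵀ := by
  ext i j; simp

lemma norm_transpose {p q : ℕ} (X : Matrix (Fin p) (Fin q) ℝ) : ‖Xᵀ‖ = ‖X‖ := by
  rw [← Matrix.l2_opNorm_conjTranspose X, conjT_eq_transpose]

lemma norm_one_le : ‖(1 : Matrix (Fin m) (Fin m) ℝ)‖ ≤ 1 := by
  rw [Matrix.l2_opNorm_def]
  have h : Matrix.toEuclideanLin (1 : Matrix (Fin m) (Fin m) ℝ) = LinearMap.id := by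
    rw [Matrix.toEuclideanLin_eq_toLin, Matrix.toLin_one]
  rw [LinearEquiv.trans_apply, h]
  exact ContinuousLinearMap.norm_id_le

/-- the selector matrix -/
def P (φ : Fin m → Fin n) : Matrix (Fin m) (Fin n) ℝ :=
  (1 : Matrix (Fin n) (Fin n) ℝ).submatrix φ id

lemma P_mul_Pt {φ : Fin m → Fin n} (hφ : Function.Injective φ) :
    P φ * (P φ)ᵀ = 1 := by
  ext k k'
  simp only [Matrix.mul_apply, P, Matrix.transpose_apply, Matrix.submatrix_apply, id_eq,
    Matrix.one_apply]
  rcases eq_or_ne k k' with rfl | hkk'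
  · simp
  · have : ∀ j, (if φ k = j then (1:ℝ) else 0) * (if φ k' = j then 1 else 0) = 0 := by
      intro j
      rcases eq_or_ne (φ k) j with rfl | h
      · simp [if_neg (fun h' : φ k' = φ k => hkk' (hφ h'.symm))]
      · simp [h]
    simp [this, hkk']

lemma norm_Pt_le {φ : Fin m → Fin n} (hφ : Function.Injective φ) : ‖(P φ)ᵀ‖ ≤ 1 := by
  have h := Matrix.l2_opNorm_conjTranspose_mul_self ((P φ)ᵀ)
  rw [conjT_eq_transpose, Matrix.transpose_transpose, P_mul_Pt hφ] at h
  nlinarith [norm_nonneg ((P φ)ᵀ), norm_one_le (m := m), norm_nonneg (1 : Matrix (Fin m) (Fin m) ℝ)]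

lemma norm_P_le {φ : Fin m → Fin n} (hφ : Function.Injective φ) : ‖P φ‖ ≤ 1 := by
  rw [← norm_transpose] at *; exact norm_Pt_le hφ

lemma norm_transpose_mul_P {φ : Fin m → Fin n} (hφ : Function.Injective φ)
    (X : Matrix (Fin m) (Fin n) ℝ) : ‖Xᵀ * P φ‖ = ‖X‖ := by
  refine le_antisymm ?_ ?_
  · calc ‖Xᵀ * P φ‖ ≤ ‖Xᵀ‖ * ‖P φ‖ := Matrix.l2_opNorm_mul _ _
      _ ≤ ‖X‖ * 1 := by
          have := norm_P_le hφ
          have h2 := norm_transpose X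
          nlinarith [norm_nonneg (P φ), norm_nonneg Xᵀ]
      _ = ‖X‖ := mul_one _
  · have hX : Xᵀ = (Xᵀ * P φ) * (P φ)ᵀ := by
      rw [Matrix.mul_assoc, P_mul_Pt hφ, Matrix.mul_one]
    calc ‖X‖ = ‖Xᵀ‖ := (norm_transpose X).symm
      _ = ‖(Xᵀ * P φ) * (P φ)ᵀ‖ := by rw [← hX]
      _ ≤ ‖Xᵀ * P φ‖ * ‖(P φ)ᵀ‖ := Matrix.l2_opNorm_mul _ _
      _ ≤ ‖Xᵀ * P φ‖ * 1 := by
          have := norm_Pt_le hφ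
          nlinarith [norm_nonneg (Xᵀ * P φ)]
      _ = _ := mul_one _

lemma inj_of_det_ne (A : Matrix (Fin m) (Fin n) ℝ) {φ : Fin m → Fin n}
    (h : (A.submatrix id φ).det ≠ 0) : Function.Injective φ := by
  intro i i' hii'
  by_contra hne
  exact h (Matrix.det_zero_of_column_eq hne (fun k => by simp [hii']))

lemma det_At_submatrix (A : Matrix (Fin m) (Fin n) ℝ) (ψ : Fin m → Fin n) :
    (Aᵀ.submatrix ψ id).det = (A.submatrix id ψ).det := by
  have h : Aᵀ.submatrix ψ id = (A.submatrix id ψ)ᵀ := rfl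
  rw [h, Matrix.det_transpose]

lemma cb_sym (A : Matrix (Fin m) (Fin n) ℝ) (d : Fin n → ℝ) :
    (m.factorial : ℝ) * (A * diagonal d * Aᵀ).det
      = ∑ ψ : Fin m → Fin n, (∏ i, d (ψ i)) * (A.submatrix id ψ).det ^ 2 := by
  rw [cb A d Aᵀ]
  refine Finset.sum_congr rfl fun ψ _ => ?_
  rw [det_At_submatrix, sq]

lemma det_ADAt_pos (A : Matrix (Fin m) (Fin n) ℝ) {d : Fin n → ℝ} (hd : ∀ i, 0 ≤ d i)
    {ψ0 : Fin m → Fin n} (h0 : (A.submatrix id ψ0).det ≠ 0) (h0d : ∀ i, 0 < d (ψ0 i)) :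
    0 < (A * diagonal d * Aᵀ).det := by
  have hcb := cb_sym A d
  have hterm : ∀ ψ : Fin m → Fin n,
      0 ≤ (∏ i, d (ψ i)) * (A.submatrix id ψ).det ^ 2 := fun ψ =>
    mul_nonneg (Finset.prod_nonneg fun i _ => hd _) (sq_nonneg _)
  have h1 : (∏ i, d (ψ0 i)) * (A.submatrix id ψ0).det ^ 2
      ≤ ∑ ψ : Fin m → Fin n, (∏ i, d (ψ i)) * (A.submatrix id ψ).det ^ 2 :=
    Finset.single_le_sum (fun ψ _ => hterm ψ) (Finset.mem_univ ψ0)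
  have h2 : 0 < (∏ i, d (ψ0 i)) * (A.submatrix id ψ0).det ^ 2 :=
    mul_pos (Finset.prod_pos fun i _ => h0d i) (by positivity)
  have hfac : (0:ℝ) < (m.factorial : ℝ) := by positivity
  nlinarith [hcb]

lemma key_decomposition (A : Matrix (Fin m) (Fin n) ℝ) {d : Fin n → ℝ}
    (hdet : (A * diagonal d * Aᵀ).det ≠ 0) :
    Aᵀ * (A * diagonal d * Aᵀ)⁻¹ * (A * diagonal d)
      = ∑ φ : Fin m → Fin n,
          ((((m.factorial : ℝ) * (A * diagonal d * Aᵀ).det)⁻¹ * ((∏ i, d (φ i)) * (A.submatrix id φ).det)) •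
            (Aᵀ * ((A.submatrix id φ).adjugateᵀ * P φ))) := by
  set M := A * diagonal d * Aᵀ with hM
  have hfac : ((m.factorial : ℕ) : ℝ) ≠ 0 := Nat.cast_ne_zero.mpr (Nat.factorial_ne_zero m)
  have hinv : M⁻¹ = (M.det)⁻¹ • M.adjugate := by
    rw [Matrix.inv_def, Ring.inverse_eq_inv]
  have hdecomp := decomp A d
  -- M.adjugate * (A * diagonal d) = (m!)⁻¹ • ∑ ...
  have h2 : M.adjugate * (A * diagonal d)
      = ((m.factorial : ℝ))⁻¹ • ∑ φ : Fin m → Fin n, ((∏ i, d (φ i)) * (A.submatrix id φ).det) •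
          ((A.submatrix id φ).adjugateᵀ * ((1 : Matrix (Fin n) (Fin n) ℝ).submatrix φ id)) := by
    rw [← hdecomp, smul_smul, inv_mul_cancel₀ hfac, one_smul]
  calc Aᵀ * M⁻¹ * (A * diagonal d)
      = Aᵀ * (M⁻¹ * (A * diagonal d)) := by rw [Matrix.mul_assoc]
    _ = (M.det)⁻¹ • (Aᵀ * (M.adjugate * (A * diagonal d))) := by
        rw [hinv, Matrix.smul_mul, Matrix.mul_smul]
    _ = ((M.det)⁻¹ * ((m.factorial : ℝ))⁻¹) •
          (Aᵀ * ∑ φ : Fin m → Fin n, ((∏ i, d (φ i)) * (A.submatrix id φ).det) •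
            ((A.submatrix id φ).adjugateᵀ * ((1 : Matrix (Fin n) (Fin n) ℝ).submatrix φ id))) := by
        rw [h2, Matrix.mul_smul, smul_smul]
    _ = _ := by
        rw [Matrix.mul_sum, Finset.smul_sum]
        refine Finset.sum_congr rfl fun φ _ => ?_
        rw [Matrix.mul_smul, smul_smul, mul_inv]
        congr 1
        ring

lemma norm_le_of_bases (A : Matrix (Fin m) (Fin n) ℝ) {d : Fin n → ℝ} (hd : ∀ i, 0 < d i)
    {ψ0 : Fin m → Fin n} (h0 : (A.submatrix id ψ0).det ≠ 0) {r : ℝ}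
    (hr : ∀ φ : Fin m → Fin n, (A.submatrix id φ).det ≠ 0 → ‖(A.submatrix id φ)⁻¹ * A‖ ≤ r) :
    ‖Aᵀ * (A * diagonal d * Aᵀ)⁻¹ * (A * diagonal d)‖ ≤ r := by
  have hdet : 0 < (A * diagonal d * Aᵀ).det :=
    det_ADAt_pos A (fun i => (hd i).le) h0 (fun i => hd _)
  have hfac : (0:ℝ) < (m.factorial : ℝ) := by positivity
  set c : ℝ := ((m.factorial : ℝ) * (A * diagonal d * Aᵀ).det)⁻¹ with hc
  have hcpos : 0 < c := by positivity
  have hbound : ∀ φ : Fin m → Fin n,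
      ‖(c * ((∏ i, d (φ i)) * (A.submatrix id φ).det)) •
          (Aᵀ * ((A.submatrix id φ).adjugateᵀ * P φ))‖
        ≤ (c * ((∏ i, d (φ i)) * (A.submatrix id φ).det ^ 2)) * r := by
    intro φ
    rcases eq_or_ne (A.submatrix id φ).det 0 with hz | hz
    · simp [hz]
    · have hinj := inj_of_det_ne A hz
      have hadj : (A.submatrix id φ).adjugate
          = (A.submatrix id φ).det • (A.submatrix id φ)⁻¹ := by
        rw [Matrix.inv_def, Ring.inverse_eq_inv, smul_smul, mul_inv_cancel₀ hz, one_smul]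
      have hG : Aᵀ * ((A.submatrix id φ).adjugateᵀ * P φ)
          = (A.submatrix id φ).det • (((A.submatrix id φ)⁻¹ * A)ᵀ * P φ) := by
        rw [hadj, Matrix.transpose_smul, Matrix.smul_mul, Matrix.mul_smul,
          Matrix.transpose_mul, Matrix.mul_assoc]
      rw [hG, smul_smul, norm_smul, norm_transpose_mul_P hinj, Real.norm_eq_abs]
      have habs : |c * ((∏ i, d (φ i)) * (A.submatrix id φ).det) * (A.submatrix id φ).det|
          = c * ((∏ i, d (φ i)) * (A.submatrix id φ).det ^ 2) := by
        have h1 : c * ((∏ i, d (φ i)) * (A.submatrix id φ).det) * (A.submatrix id φ).det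
            = c * ((∏ i, d (φ i)) * (A.submatrix id φ).det ^ 2) := by ring
        rw [h1, abs_of_nonneg]
        have : 0 ≤ ∏ i, d (φ i) := Finset.prod_nonneg fun i _ => (hd _).le
        positivity
      rw [habs]
      exact mul_le_mul_of_nonneg_left (hr φ hz)
        (by have : 0 ≤ ∏ i, d (φ i) := Finset.prod_nonneg fun i _ => (hd _).le; positivity)
  calc ‖Aᵀ * (A * diagonal d * Aᵀ)⁻¹ * (A * diagonal d)‖
      = ‖∑ φ : Fin m → Fin n,
          ((c * ((∏ i, d (φ i)) * (A.submatrix id φ).det)) •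
            (Aᵀ * ((A.submatrix id φ).adjugateᵀ * P φ)))‖ := by
        rw [key_decomposition A hdet.ne']
    _ ≤ ∑ φ : Fin m → Fin n, ‖(c * ((∏ i, d (φ i)) * (A.submatrix id φ).det)) •
            (Aᵀ * ((A.submatrix id φ).adjugateᵀ * P φ))‖ := norm_sum_le _ _
    _ ≤ ∑ φ : Fin m → Fin n, (c * ((∏ i, d (φ i)) * (A.submatrix id φ).det ^ 2)) * r :=
        Finset.sum_le_sum fun φ _ => hbound φ
    _ = (c * ((m.factorial : ℝ) * (A * diagonal d * Aᵀ).det)) * r := by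
        rw [← Finset.sum_mul, ← Finset.mul_sum, ← cb_sym A d]
    _ = r := by
        rw [hc, inv_mul_cancel₀ (by positivity), one_mul]

section Limit

variable (A : Matrix (Fin m) (Fin n) ℝ) (B : Fin m → Fin n)

/-- the perturbed diagonal weights -/
def dd (B : Fin m → Fin n) (ε : ℝ) : Fin n → ℝ :=
  fun j => if j ∈ Finset.image B Finset.univ then 1 else ε

lemma dd_pos {ε : ℝ} (hε : 0 < ε) : ∀ j, 0 < dd B ε j := by
  intro j
  unfold dd
  split <;> [exact one_pos; exact hε]

lemma dd_nonneg {ε : ℝ} (hε : 0 ≤ ε) : ∀ j, 0 ≤ dd B ε j := fun j => by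
  unfold dd; split <;> [exact zero_le_one; exact hε]

lemma dd_B (ε : ℝ) (i : Fin m) : dd B ε (B i) = 1 := by
  unfold dd
  rw [if_pos (Finset.mem_image_of_mem B (Finset.mem_univ i))]

lemma AD_eq (hB : Function.Injective B) :
    A * diagonal (dd B 0) = (A.submatrix id B) * P B := by
  ext i j
  rw [Matrix.mul_diagonal, Matrix.mul_apply]
  by_cases hj : j ∈ Finset.image B Finset.univ
  · obtain ⟨t0, -, ht0⟩ := Finset.mem_image.mp hj
    rw [Finset.sum_eq_single t0]
    · simp [P, Matrix.one_apply, ht0, dd, hj]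
    · intro t _ ht
      have hne : B t ≠ j := fun h => ht (hB (h.trans ht0.symm))
      simp [P, Matrix.one_apply, hne]
    · simp
  · rw [Finset.sum_eq_zero]
    · simp [dd, hj]
    · intro t _
      have hne : B t ≠ j := fun h => hj (h ▸ Finset.mem_image_of_mem B (Finset.mem_univ t))
      simp [P, Matrix.one_apply, hne]

lemma PB_At : P B * Aᵀ = (A.submatrix id B)ᵀ := by
  ext k i
  rw [Matrix.mul_apply, Finset.sum_eq_single (B k)]
  · simp [P, Matrix.one_apply]
  · intro j _ hj
    simp [P, Matrix.one_apply, Ne.symm hj]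
  · simp

lemma ADAt_eq (hB : Function.Injective B) :
    A * diagonal (dd B 0) * Aᵀ = (A.submatrix id B) * (A.submatrix id B)ᵀ := by
  rw [AD_eq A B hB, Matrix.mul_assoc, PB_At]

lemma F0_eq (hdet : IsUnit (A.submatrix id B).det) (hB : Function.Injective B) :
    Aᵀ * (A * diagonal (dd B 0) * Aᵀ)⁻¹ * (A * diagonal (dd B 0))
      = ((A.submatrix id B)⁻¹ * A)ᵀ * P B := by
  rw [ADAt_eq A B hB, AD_eq A B hB, Matrix.mul_inv_rev, Matrix.transpose_mul]
  calc Aᵀ * (((A.submatrix id B)ᵀ)⁻¹ * (A.submatrix id B)⁻¹) * (A.submatrix id B * P B)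
      = Aᵀ * (((A.submatrix id B)ᵀ)⁻¹ * (((A.submatrix id B)⁻¹ * A.submatrix id B) * P B)) := by
        simp only [Matrix.mul_assoc]
    _ = Aᵀ * ((A.submatrix id B)ᵀ)⁻¹ * P B := by
        rw [Matrix.nonsing_inv_mul _ hdet, Matrix.one_mul, Matrix.mul_assoc]
    _ = Aᵀ * ((A.submatrix id B)⁻¹)ᵀ * P B := by rw [Matrix.transpose_nonsing_inv]

end Limit

lemma F_eq_G (A : Matrix (Fin m) (Fin n) ℝ) (d : Fin n → ℝ) :
    Aᵀ * (A * diagonal d * Aᵀ)⁻¹ * (A * diagonal d)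
      = ((A * diagonal d * Aᵀ).det)⁻¹ •
          (Aᵀ * (A * diagonal d * Aᵀ).adjugate * (A * diagonal d)) := by
  rw [Matrix.inv_def, Ring.inverse_eq_inv, Matrix.mul_smul, Matrix.smul_mul]

lemma tendsto_norm (A : Matrix (Fin m) (Fin n) ℝ) {B : Fin m → Fin n}
    (hdet : (A.submatrix id B).det ≠ 0) :
    Filter.Tendsto
      (fun ε => ‖Aᵀ * (A * diagonal (dd B ε) * Aᵀ)⁻¹ * (A * diagonal (dd B ε))‖)
      (𝓝[>] (0:ℝ)) (𝓝 ‖(A.submatrix id B)⁻¹ * A‖) := by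
  have hB : Function.Injective B := inj_of_det_ne A hdet
  have hdet0 : 0 < (A * diagonal (dd B 0) * Aᵀ).det :=
    det_ADAt_pos A (dd_nonneg B le_rfl) hdet (fun i => by rw [dd_B]; exact one_pos)
  set G : ℝ → Matrix (Fin n) (Fin n) ℝ := fun ε =>
    ((A * diagonal (dd B ε) * Aᵀ).det)⁻¹ •
      (Aᵀ * (A * diagonal (dd B ε) * Aᵀ).adjugate * (A * diagonal (dd B ε))) with hG
  have hFG : ∀ ε, Aᵀ * (A * diagonal (dd B ε) * Aᵀ)⁻¹ * (A * diagonal (dd B ε)) = G ε :=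
    fun ε => F_eq_G A (dd B ε)
  have hdcont : Continuous (fun ε : ℝ => dd B ε) := by
    refine continuous_pi fun j => ?_
    unfold dd
    by_cases h : j ∈ Finset.image B Finset.univ
    · simpa [h] using continuous_const
    · simpa [h] using continuous_id'
  have hMcont : Continuous (fun ε : ℝ => A * diagonal (dd B ε) * Aᵀ) :=
    (continuous_const.matrix_mul hdcont.matrix_diagonal).matrix_mul continuous_const
  have hGcont : ContinuousAt G 0 := by
    exact ContinuousAt.smul (f := fun ε : ℝ => ((A * diagonal (dd B ε) * Aᵀ).det)⁻¹)
      (g := fun ε : ℝ => Aᵀ * (A * diagonal (dd B ε) * Aᵀ).adjugate * (A * diagonal (dd B ε)))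
      ((hMcont.matrix_det.continuousAt).inv₀ hdet0.ne')
      ((continuous_const.matrix_mul hMcont.matrix_adjugate).matrix_mul
        (continuous_const.matrix_mul hdcont.matrix_diagonal)).continuousAt
  have hnormcont : Continuous (fun X : Matrix (Fin n) (Fin n) ℝ => ‖X‖) := by
    have hL : Continuous (fun X : Matrix (Fin n) (Fin n) ℝ =>
        ((Matrix.toEuclideanLin.trans LinearMap.toContinuousLinearMap) X :
          EuclideanSpace ℝ (Fin n) →L[ℝ] EuclideanSpace ℝ (Fin n))) :=
      LinearMap.continuous_of_finiteDimensional _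
    have h : (fun X : Matrix (Fin n) (Fin n) ℝ => ‖X‖)
        = fun X => ‖(Matrix.toEuclideanLin.trans LinearMap.toContinuousLinearMap) X‖ := rfl
    rw [h]
    exact continuous_norm.comp hL
  have htd : Filter.Tendsto (fun ε => ‖G ε‖) (𝓝[>] (0:ℝ)) (𝓝 ‖G 0‖) :=
    ((hnormcont.continuousAt).comp hGcont).tendsto.mono_left nhdsWithin_le_nhds
  have hG0 : ‖G 0‖ = ‖(A.submatrix id B)⁻¹ * A‖ := by
    rw [← hFG 0, F0_eq A B (isUnit_iff_ne_zero.mpr hdet) hB, norm_transpose_mul_P hB]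
  rw [← hG0]
  simpa only [hFG] using htd

lemma exists_basis (A : Matrix (Fin m) (Fin n) ℝ) (hrank : A.rank = m) :
    ∃ ψ : Fin m → Fin n, (A.submatrix id ψ).det ≠ 0 := by
  have h1 : (A * Aᵀ).rank = m := by rw [Matrix.rank_self_mul_transpose, hrank]
  have hr : LinearMap.range (A * Aᵀ).mulVecLin = ⊤ := by
    apply Submodule.eq_top_of_finrank_eq
    rw [← Matrix.rank, h1, Module.finrank_fin_fun]
  have hsurj : Function.Surjective (A * Aᵀ).mulVecLin := LinearMap.range_eq_top.mp hr
  have hinj : Function.Injective ((A * Aᵀ).mulVec) :=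
    (LinearMap.injective_iff_surjective).mpr hsurj
  have hunit : IsUnit (A * Aᵀ) := Matrix.mulVec_injective_iff_isUnit.mp hinj
  have hdet : (A * Aᵀ).det ≠ 0 := (((A * Aᵀ).isUnit_iff_isUnit_det).mp hunit).ne_zero
  by_contra hall
  push_neg at hall
  apply hdet
  have hone : A * (diagonal (fun _ => (1:ℝ)) : Matrix (Fin n) (Fin n) ℝ) * Aᵀ = A * Aᵀ := by
    rw [Matrix.diagonal_one, Matrix.mul_one]
  have hcb := cb_sym A (fun _ => (1:ℝ))
  rw [hone] at hcb
  have hz : ∑ ψ : Fin m → Fin n, (∏ _i : Fin m, (1:ℝ)) * (A.submatrix id ψ).det ^ 2 = 0 := by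
    refine Finset.sum_eq_zero fun ψ _ => ?_
    rw [hall ψ]
    ring
  rw [hz] at hcb
  have hfac : (m.factorial : ℝ) ≠ 0 := Nat.cast_ne_zero.mpr (Nat.factorial_ne_zero m)
  exact (mul_eq_zero.mp hcb).resolve_left hfac

lemma final_ub (A : Matrix (Fin m) (Fin n) ℝ) {ψ0 : Fin m → Fin n}
    (hψ0 : (A.submatrix id ψ0).det ≠ 0) {r : ℝ}
    (hr : ∀ φ : Fin m → Fin n, (A.submatrix id φ).det ≠ 0 →
      l2OpNorm ((A.submatrix id φ)⁻¹ * A) ≤ r)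
    (d : Fin n → ℝ) (hd : ∀ i, 0 < d i) :
    l2OpNorm (A.transpose * (A * Matrix.diagonal d * A.transpose)⁻¹ * (A * Matrix.diagonal d)) ≤ r :=
  norm_le_of_bases A hd hψ0 hr

lemma final_tendsto (A : Matrix (Fin m) (Fin n) ℝ) {B : Fin m → Fin n}
    (hdet : (A.submatrix id B).det ≠ 0) :
    Filter.Tendsto
      (fun ε => l2OpNorm (A.transpose * (A * Matrix.diagonal (dd B ε) * A.transpose)⁻¹ *
        (A * Matrix.diagonal (dd B ε))))
      (𝓝[>] (0:ℝ)) (𝓝 (l2OpNorm ((A.submatrix id B)⁻¹ * A))) :=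
  tendsto_norm A hdet

end ChiAux

/-- for a full row rank matrix `A`,
`sup{‖A.transpose(ADA.transpose)⁻¹AD‖ : D positive definite diagonal}` equals the maximum of
`‖A_B⁻¹A‖` over nonsingular `m×m` column-submatrices `A_B` of `A`. -/
theorem chiBar_matrix_eq_max_basis {m n : ℕ} (A : Matrix (Fin m) (Fin n) ℝ)
    (hrank : A.rank = m) :
    IsGreatest
      {r | ∃ B : Fin m → Fin n, Function.Injective B ∧
        IsUnit (A.submatrix id B).det ∧
        r = l2OpNorm ((A.submatrix id B)⁻¹ * A)}
      (sSup {r | ∃ d : Fin n → ℝ, (∀ i, 0 < d i) ∧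
        r = l2OpNorm (A.transpose * (A * Matrix.diagonal d * A.transpose)⁻¹ * (A * Matrix.diagonal d))}) := by
  classical
  obtain ⟨ψ0, hψ0⟩ := ChiAux.exists_basis A hrank
  have hSBsub : {r | ∃ B : Fin m → Fin n, Function.Injective B ∧
        IsUnit (A.submatrix id B).det ∧
        r = l2OpNorm ((A.submatrix id B)⁻¹ * A)}
      ⊆ Set.range (fun B : Fin m → Fin n => l2OpNorm ((A.submatrix id B)⁻¹ * A)) := by
    rintro r ⟨B, -, -, rfl⟩
    exact ⟨B, rfl⟩
  have hSBfin := Set.Finite.subset (Set.finite_range _) hSBsub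
  have hSBne : Set.Nonempty {r | ∃ B : Fin m → Fin n, Function.Injective B ∧
      IsUnit (A.submatrix id B).det ∧ r = l2OpNorm ((A.submatrix id B)⁻¹ * A)} :=
    ⟨_, ψ0, ChiAux.inj_of_det_ne A hψ0, isUnit_iff_ne_zero.mpr hψ0, rfl⟩
  have hbddSB := hSBfin.bddAbove
  have hmem := hSBne.csSup_mem hSBfin
  have hDub : ∀ x ∈ {r | ∃ d : Fin n → ℝ, (∀ i, 0 < d i) ∧
      r = l2OpNorm (A.transpose * (A * Matrix.diagonal d * A.transpose)⁻¹ * (A * Matrix.diagonal d))},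
      x ≤ sSup {r | ∃ B : Fin m → Fin n, Function.Injective B ∧
        IsUnit (A.submatrix id B).det ∧ r = l2OpNorm ((A.submatrix id B)⁻¹ * A)} := by
    rintro x ⟨d, hd, rfl⟩
    exact ChiAux.final_ub A hψ0
      (fun φ hφ => le_csSup hbddSB ⟨φ, ChiAux.inj_of_det_ne A hφ, isUnit_iff_ne_zero.mpr hφ, rfl⟩)
      d hd
  have hSDne : Set.Nonempty {r | ∃ d : Fin n → ℝ, (∀ i, 0 < d i) ∧
      r = l2OpNorm (A.transpose * (A * Matrix.diagonal d * A.transpose)⁻¹ * (A * Matrix.diagonal d))} :=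
    ⟨_, fun _ => (1:ℝ), fun _ => one_pos, rfl⟩
  have hbddSD : BddAbove {r | ∃ d : Fin n → ℝ, (∀ i, 0 < d i) ∧
      r = l2OpNorm (A.transpose * (A * Matrix.diagonal d * A.transpose)⁻¹ * (A * Matrix.diagonal d))} :=
    ⟨_, hDub⟩
  have hle := csSup_le hSDne hDub
  have hge : sSup {r | ∃ B : Fin m → Fin n, Function.Injective B ∧
        IsUnit (A.submatrix id B).det ∧ r = l2OpNorm ((A.submatrix id B)⁻¹ * A)}
      ≤ sSup {r | ∃ d : Fin n → ℝ, (∀ i, 0 < d i) ∧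
        r = l2OpNorm (A.transpose * (A * Matrix.diagonal d * A.transpose)⁻¹ * (A * Matrix.diagonal d))} := by
    obtain ⟨B, hBinj, hBunit, heq⟩ := hmem
    rw [heq]
    refine le_of_tendsto (ChiAux.final_tendsto A hBunit.ne_zero) ?_
    filter_upwards [self_mem_nhdsWithin] with ε hε
    exact le_csSup hbddSD ⟨ChiAux.dd B ε, ChiAux.dd_pos B hε, rfl⟩
  have heq2 : sSup {r | ∃ d : Fin n → ℝ, (∀ i, 0 < d i) ∧
        r = l2OpNorm (A.transpose * (A * Matrix.diagonal d * A.transpose)⁻¹ * (A * Matrix.diagonal d))}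
      = sSup {r | ∃ B : Fin m → Fin n, Function.Injective B ∧
        IsUnit (A.submatrix id B).det ∧ r = l2OpNorm ((A.submatrix id B)⁻¹ * A)} :=
    le_antisymm hle hge
  rw [heq2]
  exact ⟨hmem, fun r hr => le_csSup hbddSB hr⟩
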